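/- arXiv:2502.12368 — 2 statements merged into one kernel-verified Lean document; each statement's English description precedes it below -/
import Mathlib

section
/- For a = b = 1, the function φ(ρ,x) = cos(ρx) + (x(2+x))j₀(ρx) + (x³/(1+x))j₂(ρx) solves -y'' + q(x)y = ρ² y on (0,π) with q(x) = 2/(1+x)², φ(ρ,0) = 1, φ'(ρ,0) = 2, where j₀(z) = sin(z)/z and j₂(z) = (3/z³ - 1/z)sin z - (3/z²)cos z are spherical Bessel functions. -/
open Real Set

noncomputable section

namespace Stmt9Aux

variable (ρ : ℂ)

/-- numerator of the closed form of φ -/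
def N (z : ℂ) : ℂ :=
  (ρ ^ 2 * (1 + z) - 3 * z) * ρ * Complex.cos (ρ * z)
    + (ρ ^ 2 * (2 + 3 * z) + 3) * Complex.sin (ρ * z)

def Fc (z : ℂ) : ℂ := N ρ z / (ρ ^ 3 * (1 + z))

def Gc (z : ℂ) : ℂ :=
  (3 * ρ ^ 3 * (1 + z) ^ 2 * Complex.cos (ρ * z)
    + (3 - ρ ^ 2) * ρ ^ 2 * (1 + z) ^ 2 * Complex.sin (ρ * z)
    - N ρ z) / (ρ ^ 3 * (1 + z) ^ 2)

def Hc (z : ℂ) : ℂ :=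
  (((3 - ρ ^ 2) * Complex.cos (ρ * z) - 3 * ρ * Complex.sin (ρ * z)) * ρ ^ 3 * (1 + z) ^ 3
    - (3 * ρ * Complex.cos (ρ * z) + (3 - ρ ^ 2) * Complex.sin (ρ * z)) * ρ ^ 2 * (1 + z) ^ 2
    + 2 * N ρ z) / (ρ ^ 3 * (1 + z) ^ 3)

lemma hasDerivAt_N (z : ℂ) :
    HasDerivAt (N ρ)
      ((ρ ^ 2 - 3) * ρ * Complex.cos (ρ * z)
        - (ρ ^ 2 * (1 + z) - 3 * z) * ρ ^ 2 * Complex.sin (ρ * z)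
        + 3 * ρ ^ 2 * Complex.sin (ρ * z)
        + (ρ ^ 2 * (2 + 3 * z) + 3) * ρ * Complex.cos (ρ * z)) z := by
  have hid : HasDerivAt (fun w : ℂ => ρ * w) ρ z := by
    simpa using (hasDerivAt_id z).const_mul ρ
  have hcos : HasDerivAt (fun w : ℂ => Complex.cos (ρ * w)) (-Complex.sin (ρ * z) * ρ) z :=
    (Complex.hasDerivAt_cos (ρ * z)).comp z hid
  have hsin : HasDerivAt (fun w : ℂ => Complex.sin (ρ * w)) (Complex.cos (ρ * z) * ρ) z :=
    (Complex.hasDerivAt_sin (ρ * z)).comp z hid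
  have hA : HasDerivAt (fun w : ℂ => (ρ ^ 2 * (1 + w) - 3 * w) * ρ) ((ρ ^ 2 - 3) * ρ) z := by
    have : HasDerivAt (fun w : ℂ => (ρ ^ 2 * (1 + w) - 3 * w) * ρ)
        ((ρ ^ 2 * (0 + 1) - 3 * 1) * ρ) z :=
      ((((hasDerivAt_const z (1:ℂ)).add (hasDerivAt_id z)).const_mul (ρ ^ 2)).sub
        ((hasDerivAt_id z).const_mul 3)).mul_const ρ
    convert this using 1; ring
  have hB : HasDerivAt (fun w : ℂ => ρ ^ 2 * (2 + 3 * w) + 3) (3 * ρ ^ 2) z := by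
    have : HasDerivAt (fun w : ℂ => ρ ^ 2 * (2 + 3 * w) + 3)
        (ρ ^ 2 * (0 + 3 * 1) + 0) z :=
      (((hasDerivAt_const z (2:ℂ)).add ((hasDerivAt_id z).const_mul 3)).const_mul (ρ ^ 2)).add
        (hasDerivAt_const z 3)
    convert this using 1; ring
  have := (hA.mul hcos).add (hB.mul hsin)
  refine this.congr_deriv ?_
  ring

lemma one_add_ne (x : ℝ) (hx : -1 < x) : (1 + (x : ℂ)) ≠ 0 := by
  intro h
  have : (1 : ℝ) + x = 0 := by
    have := congrArg Complex.re h
    simpa using this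
  linarith

lemma hasDerivAt_Fc (hρ : ρ ≠ 0) (z : ℂ) (hz : 1 + z ≠ 0) :
    HasDerivAt (Fc ρ) (Gc ρ z) z := by
  have hD : HasDerivAt (fun w : ℂ => ρ ^ 3 * (1 + w)) (ρ ^ 3) z := by
    have : HasDerivAt (fun w : ℂ => ρ ^ 3 * (1 + w)) (ρ ^ 3 * (0 + 1)) z :=
      ((hasDerivAt_const z (1:ℂ)).add (hasDerivAt_id z)).const_mul (ρ ^ 3)
    convert this using 1; ring
  have hDne : ρ ^ 3 * (1 + z) ≠ 0 := mul_ne_zero (pow_ne_zero _ hρ) hz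
  have := (hasDerivAt_N ρ z).div hD hDne
  refine this.congr_deriv ?_; symm
  obtain ⟨w, hw, hwz⟩ : ∃ w : ℂ, w ≠ 0 ∧ z = w - 1 := ⟨1 + z, hz, by ring⟩
  subst hwz
  have h1 : 1 + (w - 1) = w := by ring
  unfold Gc N
  rw [h1]
  rw [div_eq_div_iff (by exact mul_ne_zero (pow_ne_zero _ hρ) (pow_ne_zero _ hw))
    (by exact pow_ne_zero _ (mul_ne_zero (pow_ne_zero _ hρ) hw))]
  ring

lemma hasDerivAt_Gc (hρ : ρ ≠ 0) (z : ℂ) (hz : 1 + z ≠ 0) :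
    HasDerivAt (Gc ρ) (Hc ρ z) z := by
  have hid : HasDerivAt (fun w : ℂ => ρ * w) ρ z := by
    simpa using (hasDerivAt_id z).const_mul ρ
  have hcos : HasDerivAt (fun w : ℂ => Complex.cos (ρ * w)) (-Complex.sin (ρ * z) * ρ) z :=
    (Complex.hasDerivAt_cos (ρ * z)).comp z hid
  have hsin : HasDerivAt (fun w : ℂ => Complex.sin (ρ * w)) (Complex.cos (ρ * z) * ρ) z :=
    (Complex.hasDerivAt_sin (ρ * z)).comp z hid
  have hsq : HasDerivAt (fun w : ℂ => (1 + w) ^ 2) (2 * (1 + z)) z := by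
    have hD : HasDerivAt (fun w : ℂ => 1 + w) 1 z := by
      exact (hasDerivAt_id' z).const_add 1
    have := hD.pow 2
    exact this.congr_deriv (by ring)
  -- numerator of Gc
  have hC1 : HasDerivAt (fun w : ℂ => 3 * ρ ^ 3 * (1 + w) ^ 2)
      (3 * ρ ^ 3 * (2 * (1 + z))) z := hsq.const_mul _
  have hC2 : HasDerivAt (fun w : ℂ => (3 - ρ ^ 2) * ρ ^ 2 * (1 + w) ^ 2)
      ((3 - ρ ^ 2) * ρ ^ 2 * (2 * (1 + z))) z := hsq.const_mul _
  have hnum := ((hC1.mul hcos).add (hC2.mul hsin)).sub (hasDerivAt_N ρ z)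
  have hden : HasDerivAt (fun w : ℂ => ρ ^ 3 * (1 + w) ^ 2) (ρ ^ 3 * (2 * (1 + z))) z :=
    hsq.const_mul _
  have hDne : ρ ^ 3 * (1 + z) ^ 2 ≠ 0 := mul_ne_zero (pow_ne_zero _ hρ) (pow_ne_zero _ hz)
  have := hnum.div hden hDne
  refine this.congr_deriv ?_; symm
  obtain ⟨w, hw, hwz⟩ : ∃ w : ℂ, w ≠ 0 ∧ z = w - 1 := ⟨1 + z, hz, by ring⟩
  subst hwz
  have h1 : 1 + (w - 1) = w := by ring
  unfold Hc N
  simp only [Pi.add_apply, Pi.mul_apply, Pi.sub_apply]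
  rw [h1]
  rw [div_eq_div_iff (by exact mul_ne_zero (pow_ne_zero _ hρ) (pow_ne_zero _ hw))
    (by exact pow_ne_zero _ (mul_ne_zero (pow_ne_zero _ hρ) (pow_ne_zero _ hw)))]
  ring

lemma phi_eq (hρ : ρ ≠ 0) (z : ℂ) (hz : z ≠ 0) (hw : 1 + z ≠ 0) :
    Complex.cos (ρ * z) + (z * (2 + z)) * (Complex.sin (ρ * z) / (ρ * z))
      + (z ^ 3 / (1 + z)) * ((3 / (ρ * z) ^ 3 - 1 / (ρ * z)) * Complex.sin (ρ * z)
          - (3 / (ρ * z) ^ 2) * Complex.cos (ρ * z))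
      = Fc ρ z := by
  have hρz : ρ * z ≠ 0 := mul_ne_zero hρ hz
  have hρ3 : ρ ^ 3 ≠ 0 := pow_ne_zero _ hρ
  have hD : ρ ^ 3 * (1 + z) ≠ 0 := mul_ne_zero hρ3 hw
  set S := Complex.sin (ρ * z) with hS
  set C := Complex.cos (ρ * z) with hC
  have hA : (z * (2 + z)) * (S / (ρ * z)) = (2 + z) * S / ρ := by
    rw [← mul_div_assoc, div_eq_div_iff hρz hρ]
    ring
  have hX : (3 / (ρ * z) ^ 3 - 1 / (ρ * z)) * S - (3 / (ρ * z) ^ 2) * C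
      = ((3 - (ρ * z) ^ 2) * S - 3 * (ρ * z) * C) / (ρ * z) ^ 3 := by
    field_simp
  have hB : (z ^ 3 / (1 + z)) * (((3 - (ρ * z) ^ 2) * S - 3 * (ρ * z) * C) / (ρ * z) ^ 3)
      = ((3 - (ρ * z) ^ 2) * S - 3 * (ρ * z) * C) / (ρ ^ 3 * (1 + z)) := by
    rw [div_mul_div_comm, div_eq_div_iff (mul_ne_zero hw (pow_ne_zero 3 hρz)) hD]
    ring
  rw [hA, hX, hB]
  unfold Fc N
  rw [← hS, ← hC]
  have hE : C + (2 + z) * S / ρ = (ρ * C + (2 + z) * S) / ρ := by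
    rw [eq_div_iff hρ, add_mul, div_mul_cancel₀ _ hρ]
    ring
  rw [hE, div_add_div _ _ hρ hD, div_eq_div_iff (mul_ne_zero hρ hD) hD]
  ring

lemma ode_eq (hρ : ρ ≠ 0) (z : ℂ) (hw : 1 + z ≠ 0) :
    -(Hc ρ z) + 2 / (1 + z) ^ 2 * Fc ρ z = ρ ^ 2 * Fc ρ z := by
  unfold Hc Fc N
  have hρ3 : ρ ^ 3 ≠ 0 := pow_ne_zero _ hρ
  have hD1 : ρ ^ 3 * (1 + z) ≠ 0 := mul_ne_zero hρ3 hw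
  have hD3 : ρ ^ 3 * (1 + z) ^ 3 ≠ 0 := mul_ne_zero hρ3 (pow_ne_zero _ hw)
  have hD2 : (1 + z) ^ 2 * (ρ ^ 3 * (1 + z)) ≠ 0 := mul_ne_zero (pow_ne_zero _ hw) hD1
  rw [← neg_div, div_mul_div_comm, div_add_div _ _ hD3 hD2, mul_div_assoc',
    div_eq_div_iff (mul_ne_zero hD3 hD2) hD1]
  ring

end Stmt9Aux

end

open Stmt9Aux in
/-- For `a = b = 1`, the function
`φ(ρ,x) = cos(ρx) + x(2+x) j₀(ρx) + (x³/(1+x)) j₂(ρx)` solves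
`-y'' + q y = ρ² y` with `q(x) = 2/(1+x)²`, `φ(ρ,0) = 1`, `φ'(ρ,0) = 2`. -/
theorem stmt_9 (ρ : ℂ) (hρ : ρ ≠ 0)
    (j₀ j₂ : ℂ → ℂ)
    (hj₀ : ∀ z, j₀ z = Complex.sin z / z)
    (hj₂ : ∀ z, j₂ z = (3 / z ^ 3 - 1 / z) * Complex.sin z - (3 / z ^ 2) * Complex.cos z)
    (φ : ℝ → ℂ)
    (hφ : φ = fun x : ℝ => Complex.cos (ρ * x) + ((x : ℂ) * (2 + (x : ℂ))) * j₀ (ρ * x)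
      + ((x : ℂ) ^ 3 / (1 + (x : ℂ))) * j₂ (ρ * x))
    (q : ℝ → ℝ) (hqdef : q = fun x => 2 / (1 + x) ^ 2) :
    (∀ x ∈ Ioo (0:ℝ) π, -(deriv (deriv φ) x) + (q x : ℂ) * φ x = ρ ^ 2 * φ x) ∧
    φ 0 = 1 ∧ deriv φ 0 = 2 := by
  -- φ agrees with Fc ∘ ofReal on Ioi (-1)
  have hEq : ∀ x ∈ Ioi (-1 : ℝ), φ x = Fc ρ (x : ℂ) := by
    intro x hx
    have hx' : (-1 : ℝ) < x := hx
    have hne : (1 + (x : ℂ)) ≠ 0 := one_add_ne x hx'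
    rcases eq_or_ne x 0 with h0 | h0
    · subst h0
      simp [hφ, hj₂, Fc, N]
      field_simp
    · have hxc : (x : ℂ) ≠ 0 := by exact_mod_cast h0
      simp only [hφ, hj₀, hj₂]
      exact phi_eq ρ hρ (x : ℂ) hxc hne
  have hopen : IsOpen (Ioi (-1 : ℝ)) := isOpen_Ioi
  -- first derivative of φ on Ioi (-1)
  have hderiv1 : ∀ x ∈ Ioi (-1 : ℝ), deriv φ x = Gc ρ (x : ℂ) := by
    intro x hx
    have hmem : Ioi (-1 : ℝ) ∈ nhds x := hopen.mem_nhds hx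
    have hev : φ =ᶠ[nhds x] fun y : ℝ => Fc ρ (y : ℂ) :=
      Filter.eventuallyEq_of_mem hmem (fun y hy => hEq y hy)
    have hF : HasDerivAt (fun y : ℝ => Fc ρ (y : ℂ)) (Gc ρ (x : ℂ)) x :=
      (hasDerivAt_Fc ρ hρ (x : ℂ) (one_add_ne x hx)).comp_ofReal
    rw [hev.deriv_eq, hF.deriv]
  -- second derivative
  have hderiv2 : ∀ x ∈ Ioi (-1 : ℝ), deriv (deriv φ) x = Hc ρ (x : ℂ) := by
    intro x hx
    have hmem : Ioi (-1 : ℝ) ∈ nhds x := hopen.mem_nhds hx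
    have hev : deriv φ =ᶠ[nhds x] fun y : ℝ => Gc ρ (y : ℂ) :=
      Filter.eventuallyEq_of_mem hmem (fun y hy => hderiv1 y hy)
    have hG : HasDerivAt (fun y : ℝ => Gc ρ (y : ℂ)) (Hc ρ (x : ℂ)) x :=
      (hasDerivAt_Gc ρ hρ (x : ℂ) (one_add_ne x hx)).comp_ofReal
    rw [hev.deriv_eq, hG.deriv]
  refine ⟨?_, ?_, ?_⟩
  · intro x hx
    have hx1 : x ∈ Ioi (-1 : ℝ) := lt_trans (by norm_num) hx.1
    rw [hderiv2 x hx1, hEq x hx1, hqdef]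
    have hnec : (1 + (x : ℂ)) ≠ 0 := one_add_ne x hx1
    have hq : ((2 / (1 + x) ^ 2 : ℝ) : ℂ) = 2 / (1 + (x : ℂ)) ^ 2 := by push_cast; ring
    rw [hq]
    exact ode_eq ρ hρ (x : ℂ) hnec
  · rw [hφ]
    simp [hj₂]
  · have h0 : (0 : ℝ) ∈ Ioi (-1 : ℝ) := by norm_num
    rw [hderiv1 0 h0]
    unfold Gc N
    have h3 : ρ ^ 3 * ((1 : ℂ) + 0) ^ 2 ≠ 0 := by
      simpa using pow_ne_zero 3 hρ
    simp only [Complex.ofReal_zero, mul_zero, Complex.cos_zero, Complex.sin_zero]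
    rw [div_eq_iff h3]
    ring
end

section
/- For a = b = 1, the function S(ρ,x) = sin(ρx)/ρ + (1/ρ)·(x²/(1+x))·j₁(ρx) solves -y'' + q(x) y = ρ² y on (0,π) with q(x) = 2/(1+x)², S(ρ,0) = 0, S'(ρ,0) = 1, where j₁(z) = sin(z)/z² - cos(z)/z is the spherical Bessel function of order 1. -/
open Real Set

/-- For `a = b = 1`, the function `S(ρ,x) = sin(ρx)/ρ + (1/ρ)(x²/(1+x)) j₁(ρx)`
solves `-y'' + q y = ρ² y` with `q(x) = 2/(1+x)²`, `S(ρ,0) = 0`, `S'(ρ,0) = 1`. -/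
theorem stmt_10 (ρ : ℂ) (hρ : ρ ≠ 0)
    (j₁ : ℂ → ℂ)
    (hj₁ : ∀ z, j₁ z = Complex.sin z / z ^ 2 - Complex.cos z / z)
    (S : ℝ → ℂ)
    (hS : S = fun x : ℝ => Complex.sin (ρ * x) / ρ
      + (1 / ρ) * ((x : ℂ) ^ 2 / (1 + (x : ℂ))) * j₁ (ρ * x))
    (q : ℝ → ℝ) (hqdef : q = fun x => 2 / (1 + x) ^ 2) :
    (∀ x ∈ Ioo (0:ℝ) π, -(deriv (deriv S) x) + (q x : ℂ) * S x = ρ ^ 2 * S x) ∧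
    S 0 = 0 ∧ deriv S 0 = 1 := by
  have hr := mul_inv_cancel₀ hρ
  -- explicit form of S
  set T : ℝ → ℂ := fun x => ρ⁻¹ * Complex.sin (ρ*x)
      + ρ⁻¹^3 * Complex.sin (ρ*x) * (1+(x:ℂ))⁻¹
      - ρ⁻¹^2 * x * Complex.cos (ρ*x) * (1+(x:ℂ))⁻¹ with hT
  have hST : S = T := by
    funext x
    simp only [hS, hT]
    rw [hj₁]
    by_cases hx : (x:ℂ) = 0
    · simp [hx]
    by_cases h1 : (1:ℂ) + x = 0
    · rw [h1]
      simp [div_eq_mul_inv, mul_comm]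
    · have hxx := mul_inv_cancel₀ hx
      linear_combination (ρ⁻¹^3 * Complex.sin (ρ*x) * (1+(x:ℂ))⁻¹ * ((x:ℂ)*(x:ℂ)⁻¹+1)
        - ρ⁻¹^2 * Complex.cos (ρ*x) * (1+(x:ℂ))⁻¹ * x) * hxx
  -- first and second derivative candidates
  set T1 : ℝ → ℂ := fun x => Complex.cos (ρ*x)
      + ρ⁻¹^3 * (ρ * Complex.cos (ρ*x) * (1+(x:ℂ))⁻¹ - Complex.sin (ρ*x) * (1+(x:ℂ))⁻¹^2)
      - ρ⁻¹^2 * (Complex.cos (ρ*x) * (1+(x:ℂ))⁻¹^2 - ρ * x * Complex.sin (ρ*x) * (1+(x:ℂ))⁻¹)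
      with hT1
  set T2 : ℝ → ℂ := fun x => -(ρ * Complex.sin (ρ*x))
      + ρ⁻¹^3 * (-(ρ^2 * Complex.sin (ρ*x) * (1+(x:ℂ))⁻¹) - 2*ρ*Complex.cos (ρ*x)*(1+(x:ℂ))⁻¹^2
          + 2*Complex.sin (ρ*x)*(1+(x:ℂ))⁻¹^3)
      - ρ⁻¹^2 * (-(2*ρ*Complex.sin (ρ*x)*(1+(x:ℂ))⁻¹^2) - 2*Complex.cos (ρ*x)*(1+(x:ℂ))⁻¹^3
          - ρ^2 * x * Complex.cos (ρ*x) * (1+(x:ℂ))⁻¹) with hT2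
  have hsin : ∀ x:ℝ, HasDerivAt (fun y:ℝ => Complex.sin (ρ*y)) (ρ * Complex.cos (ρ*x)) x := by
    intro x
    have h : HasDerivAt (fun z:ℂ => Complex.sin (ρ*z)) (Complex.cos (ρ*x) * (ρ*1)) (x:ℂ) :=
      (Complex.hasDerivAt_sin (ρ*x)).comp _ ((hasDerivAt_id (x:ℂ)).const_mul ρ)
    simpa [mul_comm] using h.comp_ofReal
  have hcos : ∀ x:ℝ, HasDerivAt (fun y:ℝ => Complex.cos (ρ*y)) (-(ρ * Complex.sin (ρ*x))) x := by
    intro x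
    have h : HasDerivAt (fun z:ℂ => Complex.cos (ρ*z)) (-Complex.sin (ρ*x) * (ρ*1)) (x:ℂ) :=
      (Complex.hasDerivAt_cos (ρ*x)).comp _ ((hasDerivAt_id (x:ℂ)).const_mul ρ)
    have h2 := h.comp_ofReal
    convert h2 using 1
    ring
  have hxc : ∀ x:ℝ, HasDerivAt (fun y:ℝ => ((y:ℂ))) 1 x := fun x =>
    (hasDerivAt_id (x:ℂ)).comp_ofReal
  have hinv : ∀ x:ℝ, (1:ℂ)+x ≠ 0 →
      HasDerivAt (fun y:ℝ => (1+(y:ℂ))⁻¹) (-((1+(x:ℂ))⁻¹^2)) x := by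
    intro x h1
    have g := ((((hasDerivAt_id ((x:ℝ):ℂ)).const_add 1).inv h1)).comp_ofReal
    simp only [id_eq] at g
    convert g using 1
    · rfl
    rw [div_eq_mul_inv, ← inv_pow]
    ring
  have hinv2 : ∀ x:ℝ, (1:ℂ)+x ≠ 0 →
      HasDerivAt (fun y:ℝ => (1+(y:ℂ))⁻¹^2) (-(2*(1+(x:ℂ))⁻¹^3)) x := by
    intro x h1
    have g := (((((hasDerivAt_id ((x:ℝ):ℂ)).const_add 1).inv h1)).pow 2).comp_ofReal
    simp only [id_eq] at g
    convert g using 1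
    · rfl
    rw [div_eq_mul_inv, ← inv_pow]
    push_cast
    simp only [Pi.inv_apply]
    ring
  have key1 : ∀ x:ℝ, (1:ℂ)+x ≠ 0 → HasDerivAt T (T1 x) x := by
    intro x h1
    have hu := mul_inv_cancel₀ h1
    have hd := (((hsin x).const_mul ρ⁻¹).add
        (((hsin x).const_mul (ρ⁻¹^3)).mul (hinv x h1))).sub
        ((((hxc x).const_mul (ρ⁻¹^2)).mul (hcos x)).mul (hinv x h1))
    simp only [hT, hT1]
    convert hd using 1
    · rfl
    · rfl
    simp only [Pi.mul_apply]
    linear_combination (-(ρ⁻¹^2 * Complex.cos (ρ*x) * (1+(x:ℂ))⁻¹)) * hu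
      + (-(Complex.cos (ρ*(x:ℂ)))) * hr
  have key2 : ∀ x:ℝ, (1:ℂ)+x ≠ 0 → HasDerivAt T1 (T2 x) x := by
    intro x h1
    have hu := mul_inv_cancel₀ h1
    have hd := ((hcos x).add
        (HasDerivAt.const_mul (ρ⁻¹^3)
          ((((hcos x).const_mul ρ).mul (hinv x h1)).sub
            ((hsin x).mul (hinv2 x h1))))).sub
        (HasDerivAt.const_mul (ρ⁻¹^2)
          (((hcos x).mul (hinv2 x h1)).sub
            ((((hxc x).const_mul ρ).mul (hsin x)).mul (hinv x h1))))
    simp only [hT1, hT2]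
    convert hd using 1
    · rfl
    · rfl
    simp only [Pi.mul_apply]
    linear_combination (ρ⁻¹^2 * ρ * Complex.sin (ρ*x) * (1+(x:ℂ))⁻¹) * hu
  have hU : IsOpen {x : ℝ | (1:ℂ)+x ≠ 0} := by
    have hc : Continuous fun x:ℝ => 1+(x:ℂ) := by continuity
    exact isOpen_ne_fun hc continuous_const
  refine ⟨?_, ?_, ?_⟩
  · intro x hx
    have h1 : (1:ℂ) + x ≠ 0 := by
      intro h
      have h' : (1:ℝ) + x = 0 := by exact_mod_cast h
      linarith [hx.1]
    have hu := mul_inv_cancel₀ h1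
    have hmem : {x : ℝ | (1:ℂ)+x ≠ 0} ∈ nhds x := hU.mem_nhds h1
    have hderiv1 : deriv S =ᶠ[nhds x] T1 := by
      filter_upwards [hmem] with y hy
      rw [hST]
      exact (key1 y hy).deriv
    have h2 : deriv (deriv S) x = T2 x := by
      rw [hderiv1.deriv_eq]
      exact (key2 x h1).deriv
    rw [h2, hST, hqdef]
    simp only [hT, hT2]
    push_cast
    rw [show ((2:ℂ)/(1+(x:ℂ))^2) = 2*(1+(x:ℂ))⁻¹^2 by rw [inv_pow]; ring]
    linear_combination (-(ρ * Complex.sin (ρ*x)) - 2*Complex.sin (ρ*x)*(1+(x:ℂ))⁻¹^2*ρ⁻¹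
        + 2*Complex.cos (ρ*x)*(1+(x:ℂ))⁻¹^2*ρ⁻¹^2) * hr
      + (-(2*Complex.cos (ρ*x)*(1+(x:ℂ))⁻¹^2*ρ⁻¹^2)) * hu
  · simp only [hS]
    simp
  · have h1 : (1:ℂ) + ((0:ℝ):ℂ) ≠ 0 := by norm_num
    rw [hST, (key1 0 h1).deriv]
    simp only [hT1]
    simp only [Complex.ofReal_zero, mul_zero, Complex.cos_zero, Complex.sin_zero, zero_mul,
      add_zero, sub_zero, inv_one, mul_one, one_mul, zero_sub, mul_neg, neg_zero, one_pow]
    linear_combination (ρ⁻¹^2) * hr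
end
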